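/- Let d_i, d_j > 2 be integers, J ≠ 0, and β* = (1/(2|J|)) · arccosh(1 + 2/(d_i d_j - d_i - d_j)). For β > 0, define D(β) = 16·((d_i-1)/d_i)·((d_j-1)/d_j) - 16·((d_i d_j - d_i - d_j)/(d_i d_j))·cosh²(βJ). Then D(β) > 0 for β < β*, D(β*) = 0, and D(β) < 0 for β > β*. -/

import Mathlib

noncomputable def arcosh (x : ℝ) : ℝ := Real.log (x + Real.sqrt (x ^ 2 - 1))

lemma cosh_arcosh {y : ℝ} (hy : 1 ≤ y) : Real.cosh (arcosh y) = y := by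
  have h1 : (0:ℝ) ≤ y ^ 2 - 1 := by nlinarith
  have hs := Real.sq_sqrt h1
  have hsnn := Real.sqrt_nonneg (y ^ 2 - 1)
  have hpos : 0 < y + Real.sqrt (y ^ 2 - 1) := by nlinarith
  rw [arcosh, Real.cosh_eq, Real.exp_log hpos, Real.exp_neg, Real.exp_log hpos]
  field_simp
  nlinarith

lemma arcosh_pos {y : ℝ} (hy : 1 < y) : 0 < arcosh y := by
  have hsnn := Real.sqrt_nonneg (y ^ 2 - 1)
  exact Real.log_pos (by nlinarith)

theorem bethe_center_determinant_sign (di dj : ℕ) (hdi : 2 < di) (hdj : 2 < dj)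
    (J : ℝ) (hJ : J ≠ 0) :
    let βstar := (1 / (2 * |J|)) * arcosh (1 + 2 / ((di:ℝ) * dj - di - dj))
    let D : ℝ → ℝ := fun β =>
      16 * (((di:ℝ) - 1) / di) * (((dj:ℝ) - 1) / dj)
        - 16 * (((di:ℝ) * dj - di - dj) / ((di:ℝ) * dj)) * Real.cosh (β * J) ^ 2
    (∀ β : ℝ, 0 < β → β < βstar → D β > 0) ∧
    D βstar = 0 ∧
    (∀ β : ℝ, βstar < β → D β < 0) := by
  intro βstar D
  have hdi' : (3:ℝ) ≤ di := by exact_mod_cast hdi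
  have hdj' : (3:ℝ) ≤ dj := by exact_mod_cast hdj
  set c : ℝ := (di:ℝ) * dj - di - dj with hc
  have hcpos : 0 < c := by nlinarith
  have hJpos : 0 < |J| := abs_pos.mpr hJ
  have hy : 1 < 1 + 2 / c := by
    have := div_pos (by norm_num : (0:ℝ) < 2) hcpos
    linarith
  have hβpos : 0 < βstar := by
    have := arcosh_pos hy
    positivity
  -- key: cosh(βstar * J) ^ 2 = 1 + 1/c
  have hkey : Real.cosh (βstar * J) ^ 2 = 1 + 1 / c := by
    have habs : |βstar * J| = βstar * |J| := by
      rw [abs_mul, abs_of_pos hβpos]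
    have h2 : 2 * (βstar * |J|) = arcosh (1 + 2 / c) := by
      field_simp [βstar]
      have hc0 : c ≠ 0 := ne_of_gt hcpos
      have e : βstar * |J| * 2 = arcosh (1 + 2 / c) := by
        show 1 / (2 * |J|) * arcosh (1 + 2 / c) * |J| * 2 = _
        rw [show 1 / (2 * |J|) * arcosh (1 + 2 / c) * |J| * 2 = arcosh (1 + 2 / c) * ((2 * |J|)⁻¹ * (2 * |J|)) by ring, inv_mul_cancel₀ (by positivity), mul_one]
      rw [show (c + 2) / c = 1 + 2 / c by field_simp]
      linear_combination e
    have hdouble : Real.cosh (2 * (βstar * |J|)) = 2 * Real.cosh (βstar * |J|) ^ 2 - 1 := by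
      rw [Real.cosh_two_mul, Real.cosh_sq]; ring
    rw [h2, cosh_arcosh hy.le] at hdouble
    have : Real.cosh (βstar * J) = Real.cosh (βstar * |J|) := by
      rw [← Real.cosh_abs, habs]
    rw [this]
    have hcne : c ≠ 0 := ne_of_gt hcpos
    field_simp at hdouble ⊢
    linarith
  -- rewrite D
  have hdipos : (0:ℝ) < di := by linarith
  have hdjpos : (0:ℝ) < dj := by linarith
  have hD : ∀ β, D β = (16 / ((di:ℝ) * dj)) * ((c + 1) - c * Real.cosh (β * J) ^ 2) := by
    intro β
    simp only [D]
    field_simp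
    ring
  have hmono : ∀ a b : ℝ, 0 ≤ a → a < b → Real.cosh (a * J) ^ 2 < Real.cosh (b * J) ^ 2 := by
    intro a b ha hab
    have h1 : Real.cosh (a * J) < Real.cosh (b * J) := by
      rw [Real.cosh_lt_cosh, abs_mul, abs_mul]
      exact (mul_lt_mul_iff_left₀ hJpos).mpr (by rw [abs_of_nonneg ha, abs_of_pos (lt_of_le_of_lt ha hab)]; exact hab)
    have h2 : 0 < Real.cosh (a * J) := Real.cosh_pos _
    nlinarith
  have hcoef : 0 < 16 / ((di:ℝ) * dj) := by positivity
  refine ⟨?_, ?_, ?_⟩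
  · intro β hβ0 hβ
    rw [hD]
    have := hmono β βstar hβ0.le hβ
    rw [hkey] at this
    have : c * Real.cosh (β * J) ^ 2 < c * (1 + 1/c) := by
      exact (mul_lt_mul_iff_right₀ hcpos).mpr this
    have hcne : c ≠ 0 := ne_of_gt hcpos
    rw [mul_add, mul_one_div, div_self hcne] at this
    have hpos : 0 < (c + 1) - c * Real.cosh (β * J) ^ 2 := by linarith
    exact mul_pos hcoef hpos
  · rw [hD, hkey]
    have hcne : c ≠ 0 := ne_of_gt hcpos
    field_simp
    ring
  · intro β hβ
    rw [hD]
    have := hmono βstar β hβpos.le hβ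
    rw [hkey] at this
    have : c * (1 + 1/c) < c * Real.cosh (β * J) ^ 2 :=
      (mul_lt_mul_iff_right₀ hcpos).mpr this
    have hcne : c ≠ 0 := ne_of_gt hcpos
    rw [mul_add, mul_one_div, div_self hcne] at this
    have hneg : (c + 1) - c * Real.cosh (β * J) ^ 2 < 0 := by linarith
    exact mul_neg_of_pos_of_neg hcoef hneg
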